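/- Let F ⊆ F₀ ⊆ F₁ be a tower of fields, u a tuple from F₁, and I the ideal of polynomials over F₀ vanishing at u. If F(u) and F₀ are linearly disjoint over F, then I is generated by its intersection with F[X̄], i.e., I = (I ∩ F[X̄])·F₀[X̄]. -/

import Mathlib

set_option maxHeartbeats 1000000
set_option synthInstance.maxHeartbeats 400000

/-- Let `F ⊆ F₀ ⊆ F₁` be a tower of fields, `u` a tuple from `F₁`, and `I`
the ideal of polynomials over `F₀` vanishing at `u`.  If `F(u)` and `F₀` are linearly
disjoint over `F`, then `I` is generated by its intersection with `F[X̄]`: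
`I = (I ∩ F[X̄])·F₀[X̄]`. -/
theorem stmt3 {F₁ : Type*} [Field F₁] (F F₀ : Subfield F₁) (hFF₀ : F ≤ F₀)
    (n : ℕ) (u : Fin n → F₁)
    (hLD : ∀ (m : ℕ) (v : Fin m → F₁),
      (∀ i, v i ∈ Subfield.closure ((F : Set F₁) ∪ Set.range u)) →
      LinearIndependent (↥F) v → LinearIndependent (↥F₀) v) :
    RingHom.ker (MvPolynomial.aeval u : MvPolynomial (Fin n) (↥F₀) →ₐ[↥F₀] F₁) =
      Ideal.span ((MvPolynomial.map (Subfield.inclusion hFF₀)) ''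
        {q : MvPolynomial (Fin n) (↥F) |
          MvPolynomial.map (Subfield.inclusion hFF₀) q ∈
            RingHom.ker (MvPolynomial.aeval u : MvPolynomial (Fin n) (↥F₀) →ₐ[↥F₀] F₁)}) := by
  classical
  set ι := Subfield.inclusion hFF₀ with hι
  apply le_antisymm
  · -- hard direction: ker ⊆ span
    intro p hp
    rw [RingHom.mem_ker] at hp
    set S := p.support with hS
    set U : (Fin n →₀ ℕ) → F₁ := fun m => ∏ i, u i ^ m i with hU
    obtain ⟨b, hbsub, hbspan, hbli⟩ := exists_linearIndependent (↥F) (U '' ↑S)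
    have hbfin : b.Finite := (S.finite_toSet.image U).subset hbsub
    have hFint : Fintype b := hbfin.fintype
    set B := b.toFinset with hB
    have hBb : ∀ x, x ∈ B ↔ x ∈ b := fun x => Set.mem_toFinset
    -- every element of b lies in the closure F(u)
    have hmemcl : ∀ x ∈ b, x ∈ Subfield.closure ((F : Set F₁) ∪ Set.range u) := by
      intro x hx
      obtain ⟨m, -, rfl⟩ := hbsub hx
      show ∏ i, u i ^ m i ∈ _
      refine Subfield.prod_mem _ fun i _ => pow_mem ?_ _
      exact Subfield.subset_closure (Set.mem_union_right _ ⟨i, rfl⟩)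
    -- F₀-linear independence of the basis elements
    have hli₀ : LinearIndependent (↥F₀) (fun x : b => (x : F₁)) := by
      let e := Fintype.equivFin b
      have h1 : LinearIndependent (↥F) (fun i => ((e.symm i : b) : F₁)) :=
        hbli.comp e.symm e.symm.injective
      have h2 := hLD _ _ (fun i => hmemcl _ (e.symm i).2) h1
      have h3 : (fun x : b => (x : F₁)) = (fun i => ((e.symm i : b) : F₁)) ∘ e := by
        funext x; simp
      rw [h3]
      exact h2.comp e e.injective
    -- representation of monomial values in terms of the basis
    have hrep : ∀ m, ∃ a : F₁ → ↥F, m ∈ S → ∑ v ∈ B, (a v : F₁) * v = U m := by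
      intro m
      by_cases hm : m ∈ S
      · have hmem : U m ∈ Submodule.span (↥F) b := by
          rw [hbspan]; exact Submodule.subset_span ⟨m, hm, rfl⟩
        rw [← Set.coe_toFinset b, Submodule.mem_span_finset] at hmem
        obtain ⟨a, -, ha⟩ := hmem
        refine ⟨fun v => a v, fun _ => ?_⟩
        simpa [Subfield.smul_def] using ha
      · exact ⟨0, fun h => absurd h hm⟩
    choose A hA using hrep
    -- choice of a monomial representing each basis element
    have hσ' : ∀ v, ∃ m, v ∈ B → m ∈ S ∧ U m = v := by
      intro v
      by_cases hv : v ∈ B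
      · obtain ⟨m, hm, hUm⟩ := hbsub ((hBb v).1 hv)
        exact ⟨m, fun _ => ⟨hm, hUm⟩⟩
      · exact ⟨0, fun h => absurd h hv⟩
    choose σ hσ using hσ'
    -- the coefficients of the combination vanish
    have hz : ∀ v ∈ B, ∑ m ∈ S, p.coeff m * ι (A m v) = 0 := by
      have hev : ∑ v ∈ B, (((∑ m ∈ S, p.coeff m * ι (A m v)) : ↥F₀) : F₁) * v = 0 := by
        have e1 : (MvPolynomial.aeval u) p
            = ∑ m ∈ S, ((MvPolynomial.coeff m p : ↥F₀) : F₁) * U m := by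
          rw [MvPolynomial.aeval_def, MvPolynomial.eval₂_eq']
          rfl
        calc ∑ v ∈ B, (((∑ m ∈ S, p.coeff m * ι (A m v)) : ↥F₀) : F₁) * v
            = ∑ v ∈ B, ∑ m ∈ S, ((MvPolynomial.coeff m p : ↥F₀) : F₁) * ((A m v : F₁) * v) := by
              have hcoe : ∀ x : ↥F, ((ι x : ↥F₀) : F₁) = (x : F₁) := fun _ => rfl
              refine Finset.sum_congr rfl fun v hv => ?_
              push_cast
              simp only [hcoe]
              rw [Finset.sum_mul]
              exact Finset.sum_congr rfl fun m hm => by ring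
          _ = ∑ m ∈ S, ((MvPolynomial.coeff m p : ↥F₀) : F₁) * ∑ v ∈ B, (A m v : F₁) * v := by
              rw [Finset.sum_comm]
              exact Finset.sum_congr rfl fun m hm => by rw [Finset.mul_sum]
          _ = ∑ m ∈ S, ((MvPolynomial.coeff m p : ↥F₀) : F₁) * U m := by
              exact Finset.sum_congr rfl fun m hm => by rw [hA m hm]
          _ = 0 := by rw [← e1, hp]
      intro v hv
      have := (Fintype.linearIndependent_iff.mp hli₀)
        (fun x : b => ∑ m ∈ S, p.coeff m * ι (A m x)) ?_ ⟨v, (hBb v).1 hv⟩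
      · exact this
      · rw [Finset.sum_subtype B hBb
          (fun v => (((∑ m ∈ S, p.coeff m * ι (A m v)) : ↥F₀) : F₁) * v)] at hev
        simp only [Subfield.smul_def]
        exact hev
    -- the polynomials over F
    set q : (Fin n →₀ ℕ) → MvPolynomial (Fin n) (↥F) :=
      fun m => MvPolynomial.monomial m 1 - ∑ v ∈ B, MvPolynomial.monomial (σ v) (A m v)
      with hq
    have haevalq : ∀ m ∈ S,
        (MvPolynomial.aeval u) (MvPolynomial.map ι (q m)) = 0 := by
      intro m hm
      have : ∀ (d : Fin n →₀ ℕ) (c : ↥F),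
          (MvPolynomial.aeval u) (MvPolynomial.map ι (MvPolynomial.monomial d c))
            = (c : F₁) * U d := by
        intro d c
        rw [MvPolynomial.map_monomial, MvPolynomial.aeval_monomial, Finsupp.prod_pow]
        rfl
      rw [hq]
      simp only [map_sub, map_sum, this]
      rw [sub_eq_zero]
      have : ∑ v ∈ B, ((A m v : F₁)) * U (σ v) = ∑ v ∈ B, (A m v : F₁) * v :=
        Finset.sum_congr rfl fun v hv => by rw [(hσ v hv).2]
      rw [this, hA m hm]
      simp
    -- p is the required combination
    have hpe : p = ∑ m ∈ S, MvPolynomial.C (p.coeff m) * MvPolynomial.map ι (q m) := by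
      have expand : ∀ m, MvPolynomial.C (p.coeff m) * MvPolynomial.map ι (q m)
          = MvPolynomial.monomial m (p.coeff m)
            - ∑ v ∈ B, MvPolynomial.monomial (σ v) (p.coeff m * ι (A m v)) := by
        intro m
        rw [hq]
        simp only [map_sub, map_sum, MvPolynomial.map_monomial, mul_sub, Finset.mul_sum,
          MvPolynomial.C_mul_monomial, map_one, mul_one]
      rw [Finset.sum_congr rfl fun m _ => expand m, Finset.sum_sub_distrib,
        MvPolynomial.support_sum_monomial_coeff, Finset.sum_comm]
      have : ∀ v ∈ B, ∑ m ∈ S, MvPolynomial.monomial (σ v) (p.coeff m * ι (A m v))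
          = 0 := by
        intro v hv
        rw [← map_sum, hz v hv, map_zero]
      rw [Finset.sum_congr rfl this]
      simp
    rw [hpe]
    refine Ideal.sum_mem _ fun m hm => Ideal.mul_mem_left _ _ ?_
    exact Ideal.subset_span ⟨q m, by simpa [RingHom.mem_ker] using haevalq m hm, rfl⟩
  · -- easy direction: span ⊆ ker
    rw [Ideal.span_le]
    rintro _ ⟨r, hr, rfl⟩
    exact hr
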